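/- Let H be an n×n graph Hadamard matrix with n ≥ 30, and let F be the real 2-uniform (n,k)-frame with signature matrix Q = I − H (so k = (n − √n)/2). Then the graph G_F contains an induced complete bipartite subgraph on 5 vertices, and consequently e_m^∞(F) = k/n + (m−1)·c_{n,k} for all m ≤ 5. -/

import Mathlib

open Matrix
open scoped Classical

noncomputable section

namespace FramesErasures

/-- The constant `c_{n,k} = sqrt(k(n-k)/(n^2(n-1)))`. -/
noncomputable def c (n k : ℕ) : ℝ :=
  Real.sqrt ((k : ℝ) * ((n : ℝ) - k) / ((n : ℝ) ^ 2 * ((n : ℝ) - 1)))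

/-- Operator norm (ℓ²→ℓ²) of a square real matrix. -/
noncomputable def opNorm {k : ℕ} (A : Matrix (Fin k) (Fin k) ℝ) : ℝ :=
  ‖Matrix.toEuclideanCLM (𝕜 := ℝ) A‖

/-- The diagonal 0-1 matrix with 1's exactly at the positions in `S`. -/
def diagS {n : ℕ} (S : Finset (Fin n)) : Matrix (Fin n) (Fin n) ℝ :=
  Matrix.diagonal fun i => if i ∈ S then 1 else 0

/-- `e_m^∞(F)`: the maximal norm of an error operator for `m` erasures. -/
noncomputable def errInf {n k : ℕ} (V : Matrix (Fin n) (Fin k) ℝ) (m : ℕ) : ℝ :=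
  sSup {x : ℝ | ∃ S : Finset (Fin n), S.card = m ∧ x = opNorm (Vᵀ * diagS S * V)}

/-- `e_m^p(F)`: the ℓᵖ-average of the norms of the error operators for `m` erasures. -/
noncomputable def errP {n k : ℕ} (V : Matrix (Fin n) (Fin k) ℝ) (m : ℕ) (p : ℝ) : ℝ :=
  ((n.choose m : ℝ)⁻¹ *
      ∑ S ∈ Finset.univ.filter fun S : Finset (Fin n) => S.card = m,
        opNorm (Vᵀ * diagS S * V) ^ p) ^ (1 / p)

/-- A Parseval frame is uniform if all diagonal Grammian entries equal `k/n`. -/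
def Uniform (n k : ℕ) (V : Matrix (Fin n) (Fin k) ℝ) : Prop :=
  ∀ j, (V * Vᵀ) j j = (k : ℝ) / n

/-- 2-uniformity, via the equiangularity characterization. -/
def TwoUniform (n k : ℕ) (V : Matrix (Fin n) (Fin k) ℝ) : Prop :=
  Uniform n k V ∧ ∀ i j, i ≠ j → |(V * Vᵀ) i j| = c n k

/-- The `n×n` all-ones matrix. -/
def Jmat (n : ℕ) : Matrix (Fin n) (Fin n) ℝ :=
  Matrix.of fun _ _ => 1

/-- A real 2-uniform `(n,k)`-frame, given by its analysis operator and signature matrix. -/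
structure TwoUniformFrame (n k : ℕ) where
  V : Matrix (Fin n) (Fin k) ℝ
  Q : Matrix (Fin n) (Fin n) ℝ
  parseval : Vᵀ * V = 1
  symm : Qᵀ = Q
  diag : ∀ i, Q i i = 0
  offdiag : ∀ i j, i ≠ j → Q i j = 1 ∨ Q i j = -1
  gram : V * Vᵀ = ((k : ℝ) / n) • (1 : Matrix (Fin n) (Fin n) ℝ) + c n k • Q

/-- The graph associated with a 2-uniform frame: `i ≠ j` adjacent iff `Q i j = -1`. -/
def frameGraph {n k : ℕ} (F : TwoUniformFrame n k) : SimpleGraph (Fin n) where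
  Adj i j := i ≠ j ∧ F.Q i j = -1
  symm := by
    refine ⟨?_⟩
    intro i j h
    refine ⟨h.1.symm, ?_⟩
    have h2 : F.Q i j = F.Q j i := by
      have := congrFun (congrFun F.symm j) i
      simpa [Matrix.transpose_apply] using this
    rw [← h2]
    exact h.2
  loopless := ⟨fun i h => h.1 rfl⟩

/-- A graph is complete bipartite (with one part possibly empty). -/
def IsCompleteBipartite {α : Type*} (G : SimpleGraph α) : Prop :=
  ∃ A : Set α, ∀ i j, G.Adj i j ↔ ((i ∈ A) ↔ (j ∉ A))

/-- `G` has an induced complete bipartite subgraph on `m` vertices. -/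
def HasInducedCompleteBipartite {n : ℕ} (G : SimpleGraph (Fin n)) (m : ℕ) : Prop :=
  ∃ S : Finset (Fin n), S.card = m ∧
    IsCompleteBipartite (G.induce (S : Set (Fin n)))

/-- The Seidel adjacency matrix of a graph. -/
noncomputable def seidel {α : Type*} [DecidableEq α] (G : SimpleGraph α) : Matrix α α ℝ :=
  Matrix.of fun i j => if i = j then 0 else if G.Adj i j then -1 else 1

/-- Switching equivalence of graphs: Seidel matrices conjugate by a product of a permutation
and a `±1` diagonal matrix. -/
def SwitchingEquivalent {α : Type*} [DecidableEq α] (G H : SimpleGraph α) : Prop :=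
  ∃ (σ : Equiv.Perm α) (ε : α → ℝ), (∀ i, ε i = 1 ∨ ε i = -1) ∧
    ∀ i j, seidel H i j = ε i * ε j * seidel G (σ i) (σ j)

/-- `G ∈ 𝒢_m^(s)`: the minimal number of edges in the switching class of `G` equals `s`. -/
def MinSwitchEdges {α : Type*} [DecidableEq α] (G : SimpleGraph α) (s : ℕ) : Prop :=
  IsLeast {t : ℕ | ∃ H : SimpleGraph α, SwitchingEquivalent G H ∧ H.edgeSet.ncard = t} s

/-- `lam` is the largest eigenvalue of the real matrix `A`. -/
def IsMaxEigenvalue {m : ℕ} (A : Matrix (Fin m) (Fin m) ℝ) (lam : ℝ) : Prop :=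
  (∃ v : Fin m → ℝ, v ≠ 0 ∧ A.mulVec v = lam • v) ∧
  ∀ μ : ℝ, (∃ v : Fin m → ℝ, v ≠ 0 ∧ A.mulVec v = μ • v) → μ ≤ lam

/-- A 2-uniform frame is 3-uniform if the error norm is the same for all triple erasures. -/
def ThreeUniform {n k : ℕ} (F : TwoUniformFrame n k) : Prop :=
  ∀ S T : Finset (Fin n), S.card = 3 → T.card = 3 →
    opNorm (F.Vᵀ * diagS S * F.V) = opNorm (F.Vᵀ * diagS T * F.V)

open scoped Matrix.Norms.L2Operator

lemma opNorm_eq_l2 {k : ℕ} (A : Matrix (Fin k) (Fin k) ℝ) : opNorm A = ‖A‖ := rfl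

lemma conjT_real {a b : Type*} [Fintype a] [Fintype b] (A : Matrix a b ℝ) : Aᴴ = Aᵀ := by
  ext i j; simp [Matrix.conjTranspose_apply]

lemma opNorm_sandwich {n k : ℕ} (V : Matrix (Fin n) (Fin k) ℝ) (D : Matrix (Fin n) (Fin n) ℝ)
    (hDT : Dᵀ = D) (hDD : D * D = D) :
    opNorm (Vᵀ * D * V) = ‖D * (V * Vᵀ) * D‖ := by
  have e1 : Vᵀ * D * V = (D * V)ᴴ * (D * V) := by
    rw [Matrix.conjTranspose_mul, conjT_real, conjT_real, hDT, ← Matrix.mul_assoc,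
      Matrix.mul_assoc Vᵀ D D, hDD]
  have e2 : D * (V * Vᵀ) * D = (Vᵀ * D)ᴴ * (Vᵀ * D) := by
    rw [Matrix.conjTranspose_mul, conjT_real, conjT_real, hDT, Matrix.transpose_transpose]
    simp only [Matrix.mul_assoc]
  rw [opNorm_eq_l2, e1, e2, Matrix.l2_opNorm_conjTranspose_mul_self,
    Matrix.l2_opNorm_conjTranspose_mul_self]
  have e3 : Vᵀ * D = (D * V)ᴴ := by
    rw [Matrix.conjTranspose_mul, conjT_real, conjT_real, hDT]
  rw [e3, Matrix.l2_opNorm_conjTranspose]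

lemma l2_opNorm_le_row_sums {n : ℕ} (A : Matrix (Fin n) (Fin n) ℝ) (hsym : Aᵀ = A)
    {r : ℝ} (hr : 0 ≤ r) (h : ∀ i, ∑ j, |A i j| ≤ r) : ‖A‖ ≤ r := by
  rw [Matrix.l2_opNorm_def]
  refine ContinuousLinearMap.opNorm_le_bound _ hr fun x => ?_
  have key : ∀ {m : ℕ} (y : EuclideanSpace ℝ (Fin m)), ‖y‖ = Real.sqrt (∑ i, (y i)^2) := by
    intro m y
    rw [EuclideanSpace.norm_eq]
    congr 1
    exact Finset.sum_congr rfl fun i _ => by rw [Real.norm_eq_abs, sq_abs]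
  have happ : (LinearEquiv.trans Matrix.toEuclideanLin LinearMap.toContinuousLinearMap A) x
      = Matrix.toEuclideanLin A x := rfl
  rw [happ, key, key]
  have hmain : ∑ i, ((Matrix.toEuclideanLin A x) i)^2 ≤ r^2 * ∑ j, (x j)^2 := by
    have hasv : ∀ i, (Matrix.toEuclideanLin A x) i = ∑ j, A i j * x j := by
      intro i; rfl
    have hCS : ∀ i, (∑ j, A i j * x j)^2 ≤ (∑ j, |A i j|) * (∑ j, |A i j| * (x j)^2) := by
      intro i
      have h1 : (∑ j, A i j * x j)^2 ≤ (∑ j, |A i j| * |x j|)^2 := by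
        calc (∑ j, A i j * x j)^2 = |∑ j, A i j * x j|^2 := (sq_abs _).symm
          _ ≤ (∑ j, |A i j * x j|)^2 := by
              apply pow_le_pow_left₀ (abs_nonneg _) (Finset.abs_sum_le_sum_abs _ _)
          _ = (∑ j, |A i j| * |x j|)^2 := by simp [abs_mul]
      refine h1.trans ?_
      calc (∑ j, |A i j| * |x j|)^2
          = (∑ j, Real.sqrt |A i j| * (Real.sqrt |A i j| * |x j|))^2 := by
            congr 1
            refine Finset.sum_congr rfl fun j _ => ?_
            rw [← mul_assoc, Real.mul_self_sqrt (abs_nonneg _)]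
        _ ≤ (∑ j, (Real.sqrt |A i j|)^2) * (∑ j, (Real.sqrt |A i j| * |x j|)^2) :=
            Finset.sum_mul_sq_le_sq_mul_sq _ _ _
        _ = (∑ j, |A i j|) * (∑ j, |A i j| * (x j)^2) := by
            congr 1 <;> refine Finset.sum_congr rfl fun j _ => ?_
            · exact Real.sq_sqrt (abs_nonneg _)
            · rw [mul_pow, Real.sq_sqrt (abs_nonneg _), sq_abs]
    calc ∑ i, ((Matrix.toEuclideanLin A x) i)^2
        = ∑ i, (∑ j, A i j * x j)^2 := by
          exact Finset.sum_congr rfl fun i _ => by rw [hasv]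
      _ ≤ ∑ i, (∑ j, |A i j|) * (∑ j, |A i j| * (x j)^2) := Finset.sum_le_sum fun i _ => hCS i
      _ ≤ ∑ i, r * (∑ j, |A i j| * (x j)^2) := by
          refine Finset.sum_le_sum fun i _ => ?_
          apply mul_le_mul_of_nonneg_right (h i)
          exact Finset.sum_nonneg fun j _ => mul_nonneg (abs_nonneg _) (sq_nonneg _)
      _ = r * ∑ j, (∑ i, |A i j|) * (x j)^2 := by
          rw [← Finset.mul_sum, Finset.sum_comm]
          congr 1
          exact Finset.sum_congr rfl fun j _ => by rw [Finset.sum_mul]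
      _ ≤ r * ∑ j, r * (x j)^2 := by
          apply mul_le_mul_of_nonneg_left _ hr
          refine Finset.sum_le_sum fun j _ => ?_
          apply mul_le_mul_of_nonneg_right _ (sq_nonneg _)
          have : ∀ i, |A i j| = |A j i| := fun i => by
            rw [← Matrix.transpose_apply A j i, hsym]
          rw [Finset.sum_congr rfl fun i _ => this i]
          exact h j
      _ = r^2 * ∑ j, (x j)^2 := by rw [← Finset.mul_sum]; ring
  calc Real.sqrt (∑ i, ((Matrix.toEuclideanLin A x) i)^2)
      ≤ Real.sqrt (r^2 * ∑ j, (x j)^2) := Real.sqrt_le_sqrt hmain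
    _ = r * Real.sqrt (∑ j, (x j)^2) := by
        rw [Real.sqrt_mul (sq_nonneg r), Real.sqrt_sq hr]

lemma le_l2_opNorm_of_eigen {n : ℕ} (A : Matrix (Fin n) (Fin n) ℝ) {w : Fin n → ℝ} (hw : w ≠ 0)
    {μ : ℝ} (hμ : 0 ≤ μ) (h : A *ᵥ w = μ • w) : μ ≤ ‖A‖ := by
  set x : EuclideanSpace ℝ (Fin n) := (WithLp.equiv 2 _).symm w with hx
  have hxn : 0 < ‖x‖ := by
    rw [norm_pos_iff]
    simpa [hx] using hw
  have h1 := Matrix.l2_opNorm_mulVec A x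
  have e1 : (EuclideanSpace.equiv (Fin n) ℝ).symm (A *ᵥ x) = μ • x := by
    ext i; simp [hx, h]
  rw [e1, norm_smul, Real.norm_eq_abs, abs_of_nonneg hμ] at h1
  exact le_of_mul_le_mul_right h1 hxn

lemma sum_pm_card {α : Type*} (T : Finset α) (f : α → ℝ)
    (hf : ∀ j ∈ T, f j = 1 ∨ f j = -1) :
    ∑ j ∈ T, f j = (T.card : ℝ) - 2 * ((T.filter (fun j => f j = -1)).card : ℝ) := by
  rw [← Finset.sum_filter_add_sum_filter_not T (fun j => f j = -1)]
  have h1 : ∑ j ∈ T.filter (fun j => f j = -1), f j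
      = -(((T.filter (fun j => f j = -1)).card : ℝ)) := by
    rw [Finset.sum_congr rfl (fun j hj => (Finset.mem_filter.mp hj).2), Finset.sum_const]
    simp
  have h2 : ∑ j ∈ T.filter (fun j => ¬ f j = -1), f j
      = ((T.filter (fun j => ¬ f j = -1)).card : ℝ) := by
    have hall : ∀ j ∈ T.filter (fun j => ¬ f j = -1), f j = 1 := by
      intro j hj
      have hm := Finset.mem_filter.mp hj
      rcases hf j hm.1 with h | h
      · exact h
      · exact absurd h hm.2
    rw [Finset.sum_congr rfl hall, Finset.sum_const]
    simp
  rw [h1, h2]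
  have hcard := Finset.card_filter_add_card_filter_not (s := T)
    (p := fun j => f j = -1)
  have : ((T.filter (fun j => f j = -1)).card : ℝ)
      + ((T.filter (fun j => ¬ f j = -1)).card : ℝ) = (T.card : ℝ) := by
    exact_mod_cast congrArg (Nat.cast (R := ℝ)) hcard
  linarith

/-- The switched sign function. -/
def gmat {n : ℕ} (H : Matrix (Fin n) (Fin n) ℝ) (z : Fin n) (i j : Fin n) : ℝ :=
  H z i * H i j * H z j

/-- neighbours in the switched graph -/
def Nbr {n : ℕ} (H : Matrix (Fin n) (Fin n) ℝ) (z i : Fin n) : Finset (Fin n) :=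
  Finset.univ.filter (fun j => gmat H z i j = -1)

set_option maxHeartbeats 1000000 in
lemma existsFive (n : ℕ) (hn : 30 ≤ n) (H : Matrix (Fin n) (Fin n) ℝ)
    (hsym : Hᵀ = H) (hent : ∀ i j, H i j = 1 ∨ H i j = -1) (hdiag : ∀ i, H i i = 1)
    (hHad : H * H = (n : ℝ) • (1 : Matrix (Fin n) (Fin n) ℝ)) :
    ∃ S : Finset (Fin n), S.card = 5 ∧ ∃ ε : Fin n → ℝ,
      (∀ i, ε i = 1 ∨ ε i = -1) ∧
      ∀ p ∈ S, ∀ q ∈ S, p ≠ q → H p q = -(ε p * ε q) := by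
  have hn0 : 0 < n := by omega
  set z : Fin n := ⟨0, by omega⟩ with hzdef
  set u : Fin n := ⟨1, by omega⟩ with hudef
  have huz : u ≠ z := by
    simp [hudef, hzdef, Fin.ext_iff]
  have hsq : ∀ i j, H i j * H i j = 1 := by
    intro i j; rcases hent i j with h | h <;> rw [h] <;> norm_num
  have hsymE : ∀ i j, H i j = H j i := by
    intro i j; rw [← Matrix.transpose_apply H j i, hsym]
  have gpm : ∀ i j, gmat H z i j = 1 ∨ gmat H z i j = -1 := by
    intro i j
    unfold gmat
    rcases hent z i with h1 | h1 <;> rcases hent i j with h2 | h2 <;>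
      rcases hent z j with h3 | h3 <;> rw [h1, h2, h3] <;> norm_num
  have gsym : ∀ i j, gmat H z i j = gmat H z j i := by
    intro i j; unfold gmat; rw [hsymE i j]; ring
  have gdiag : ∀ i, gmat H z i i = 1 := by
    intro i; unfold gmat; rw [hdiag i, mul_one, hsq z i]
  have gz : ∀ j, gmat H z z j = 1 := by
    intro j; unfold gmat; rw [hdiag z, one_mul, hsq z j]
  have gorth : ∀ i k : Fin n, i ≠ k → ∑ j, gmat H z i j * gmat H z k j = 0 := by
    intro i k hik
    have hHH : ∑ j, H i j * H k j = 0 := by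
      have h1 : (H * H) i k = ((n:ℝ) • (1 : Matrix (Fin n) (Fin n) ℝ)) i k := by rw [hHad]
      rw [Matrix.mul_apply, Matrix.smul_apply, Matrix.one_apply_ne hik, smul_zero] at h1
      calc ∑ j, H i j * H k j = ∑ j, H i j * H j k :=
            Finset.sum_congr rfl fun j _ => by rw [hsymE k j]
        _ = 0 := h1
    calc ∑ j, gmat H z i j * gmat H z k j
        = ∑ j, (H z i * H z k) * (H i j * H k j) := by
          refine Finset.sum_congr rfl fun j _ => ?_
          unfold gmat
          linear_combination (H z i * H i j * H z k * H k j) * hsq z j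
      _ = (H z i * H z k) * ∑ j, H i j * H k j := by rw [Finset.mul_sum]
      _ = 0 := by rw [hHH, mul_zero]
  -- degree count
  have step1 : ∀ i, i ≠ z → 2 * ((Nbr H z i).card : ℝ) = n := by
    intro i hiz
    have h1 : ∑ j, gmat H z i j = 0 := by
      rw [← gorth i z hiz]
      refine Finset.sum_congr rfl fun j _ => ?_
      rw [gz j, mul_one]
    rw [sum_pm_card Finset.univ (gmat H z i) (fun j _ => gpm i j)] at h1
    have : (Finset.univ.filter (fun j => gmat H z i j = -1)) = Nbr H z i := rfl
    rw [this, Finset.card_univ, Fintype.card_fin] at h1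
    linarith
  -- common neighbour count
  have step2 : ∀ i k, i ≠ z → k ≠ z → i ≠ k →
      4 * (((Nbr H z i ∩ Nbr H z k).card : ℝ)) = n := by
    intro i k hiz hkz hik
    have h0 := gorth i k hik
    have hpm : ∀ j ∈ Finset.univ, gmat H z i j * gmat H z k j = 1
        ∨ gmat H z i j * gmat H z k j = -1 := by
      intro j _
      rcases gpm i j with h1 | h1 <;> rcases gpm k j with h2 | h2 <;>
        rw [h1, h2] <;> norm_num
    rw [sum_pm_card Finset.univ _ hpm] at h0
    have hfilter : Finset.univ.filter (fun j => gmat H z i j * gmat H z k j = -1)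
        = (Nbr H z i ∪ Nbr H z k) \ (Nbr H z i ∩ Nbr H z k) := by
      ext j
      rcases gpm i j with h1 | h1 <;> rcases gpm k j with h2 | h2 <;>
        simp [Nbr, Finset.mem_filter, Finset.mem_union, Finset.mem_inter,
          Finset.mem_sdiff, h1, h2] <;> norm_num
    rw [hfilter] at h0
    have hsub : Nbr H z i ∩ Nbr H z k ⊆ Nbr H z i ∪ Nbr H z k :=
      (Finset.inter_subset_left).trans Finset.subset_union_left
    have e1 := Finset.card_sdiff_add_card_eq_card hsub
    have e2 := Finset.card_union_add_card_inter (Nbr H z i) (Nbr H z k)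
    have e1' : (((Nbr H z i ∪ Nbr H z k) \ (Nbr H z i ∩ Nbr H z k)).card : ℝ)
        + ((Nbr H z i ∩ Nbr H z k).card : ℝ) = ((Nbr H z i ∪ Nbr H z k).card : ℝ) := by
      exact_mod_cast congrArg (Nat.cast (R := ℝ)) e1
    have e2' : ((Nbr H z i ∪ Nbr H z k).card : ℝ) + ((Nbr H z i ∩ Nbr H z k).card : ℝ)
        = ((Nbr H z i).card : ℝ) + ((Nbr H z k).card : ℝ) := by
      exact_mod_cast congrArg (Nat.cast (R := ℝ)) e2
    have d1 := step1 i hiz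
    have d2 := step1 k hkz
    rw [Finset.card_univ, Fintype.card_fin] at h0
    linarith
  -- choose u and a neighbour v
  have hNu : (Nbr H z u).Nonempty := by
    rw [← Finset.card_pos]
    have := step1 u huz
    rcases Nat.eq_zero_or_pos (Nbr H z u).card with h | h
    · exfalso
      rw [h] at this
      have h2 : (n:ℝ) = 0 := by push_cast at this; linarith
      have h3 : n = 0 := by exact_mod_cast h2
      omega
    · exact h

  obtain ⟨v, hv⟩ := hNu
  have hguv : gmat H z u v = -1 := (Finset.mem_filter.mp hv).2
  have hvz : v ≠ z := by
    intro h; rw [h, gsym u z, gz u] at hguv; norm_num at hguv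
  have hvu : v ≠ u := by
    intro h; rw [h, gdiag u] at hguv; norm_num at hguv
  set C := Nbr H z u ∩ Nbr H z v with hCdef
  have hCcard : 4 * (C.card : ℝ) = n := step2 u v huz hvz (fun h => hvu h.symm)
  have hCmem : ∀ x ∈ C, gmat H z u x = -1 ∧ gmat H z v x = -1 := by
    intro x hx
    obtain ⟨h1, h2⟩ := Finset.mem_inter.mp hx
    exact ⟨(Finset.mem_filter.mp h1).2, (Finset.mem_filter.mp h2).2⟩
  have hCz : ∀ x ∈ C, x ≠ z := by
    intro x hx h
    have h2 := (hCmem x hx).1; rw [h, gsym u z, gz u] at h2; norm_num at h2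
  have hCu : ∀ x ∈ C, x ≠ u := by
    intro x hx h
    have h2 := (hCmem x hx).1; rw [h, gdiag u] at h2; norm_num at h2
  have hCv : ∀ x ∈ C, x ≠ v := by
    intro x hx h
    have h2 := (hCmem x hx).2; rw [h, gdiag v] at h2; norm_num at h2
  have key : ∃ x ∈ C, ∃ y ∈ C, x ≠ y ∧ gmat H z x y = -1 := by
    by_contra hcon
    push_neg at hcon
    have hconE : ∀ x ∈ C, ∀ y ∈ C, x ≠ y → gmat H z x y = 1 := by
      intro x hx y hy hxy
      rcases gpm x y with h | h
      · exact h
      · exact absurd h (hcon x hx y hy hxy)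
    set a : Fin n → ℕ := fun j => (C.filter (fun x => gmat H z x j = -1)).card with hadef
    have ha_eq : ∀ j, (a j : ℝ) = ∑ x ∈ C, (if gmat H z x j = -1 then (1:ℝ) else 0) := by
      intro j
      simp only [hadef]
      rw [Finset.card_filter]
      push_cast
      rfl
    have hid1 : ∑ j, (a j : ℝ) = ∑ x ∈ C, ((Nbr H z x).card : ℝ) := by
      calc ∑ j, (a j : ℝ)
          = ∑ j, ∑ x ∈ C, (if gmat H z x j = -1 then (1:ℝ) else 0) :=
            Finset.sum_congr rfl fun j _ => ha_eq j
        _ = ∑ x ∈ C, ∑ j, (if gmat H z x j = -1 then (1:ℝ) else 0) := Finset.sum_comm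
        _ = ∑ x ∈ C, ((Nbr H z x).card : ℝ) := by
            refine Finset.sum_congr rfl fun x _ => ?_
            rw [Finset.sum_boole]
            rfl
    have hid1' : 2 * ∑ j, (a j : ℝ) = (C.card : ℝ) * n := by
      rw [hid1, Finset.mul_sum]
      rw [Finset.sum_congr rfl (fun x hx => step1 x (hCz x hx))]
      rw [Finset.sum_const, nsmul_eq_mul]
    have hid2 : ∑ j, (a j : ℝ)^2
        = ∑ x ∈ C, ∑ y ∈ C, ((Nbr H z x ∩ Nbr H z y).card : ℝ) := by
      have e2 : ∀ j, (a j : ℝ)^2 = ∑ x ∈ C, ∑ y ∈ C,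
          (if gmat H z x j = -1 ∧ gmat H z y j = -1 then (1:ℝ) else 0) := by
        intro j
        rw [ha_eq j, sq, Finset.sum_mul_sum]
        refine Finset.sum_congr rfl fun x _ => Finset.sum_congr rfl fun y _ => ?_
        by_cases h1 : gmat H z x j = -1 <;> by_cases h2 : gmat H z y j = -1 <;>
          simp [h1, h2]
      calc ∑ j, (a j : ℝ)^2
          = ∑ j, ∑ x ∈ C, ∑ y ∈ C,
              (if gmat H z x j = -1 ∧ gmat H z y j = -1 then (1:ℝ) else 0) :=
            Finset.sum_congr rfl fun j _ => e2 j
        _ = ∑ x ∈ C, ∑ j, ∑ y ∈ C,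
              (if gmat H z x j = -1 ∧ gmat H z y j = -1 then (1:ℝ) else 0) :=
            Finset.sum_comm
        _ = ∑ x ∈ C, ∑ y ∈ C, ∑ j,
              (if gmat H z x j = -1 ∧ gmat H z y j = -1 then (1:ℝ) else 0) :=
            Finset.sum_congr rfl fun x _ => Finset.sum_comm
        _ = ∑ x ∈ C, ∑ y ∈ C, ((Nbr H z x ∩ Nbr H z y).card : ℝ) := by
            refine Finset.sum_congr rfl fun x _ => Finset.sum_congr rfl fun y _ => ?_
            rw [Finset.sum_boole]
            congr 1
            apply congrArg
            ext j
            simp [Nbr, Finset.mem_filter, Finset.mem_inter]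
    have hid2' : 4 * ∑ j, (a j : ℝ)^2
        = (C.card : ℝ) * (2 * n + ((C.card : ℝ) - 1) * n) := by
      rw [hid2, Finset.mul_sum]
      have hterm : ∀ x ∈ C, 4 * ∑ y ∈ C, ((Nbr H z x ∩ Nbr H z y).card : ℝ)
          = 2 * n + ((C.card : ℝ) - 1) * n := by
        intro x hx
        rw [← Finset.add_sum_erase _ _ hx, mul_add]
        have hxx : 4 * ((Nbr H z x ∩ Nbr H z x).card : ℝ) = 2 * n := by
          rw [Finset.inter_self]
          have := step1 x (hCz x hx); linarith
        have hxy : ∀ y ∈ C.erase x, 4 * ((Nbr H z x ∩ Nbr H z y).card : ℝ) = n :=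
          fun y hy => step2 x y (hCz x hx) (hCz y (Finset.mem_of_mem_erase hy))
            (fun h => (Finset.ne_of_mem_erase hy) h.symm)
        rw [hxx, Finset.mul_sum, Finset.sum_congr rfl hxy, Finset.sum_const, nsmul_eq_mul,
          Finset.card_erase_of_mem hx]
        have hc1 : 1 ≤ C.card := Finset.card_pos.mpr ⟨x, hx⟩
        rw [Nat.cast_sub hc1]
        push_cast
        ring
      rw [show ∑ x ∈ C, 4 * ∑ y ∈ C, ((Nbr H z x ∩ Nbr H z y).card : ℝ)
          = ∑ x ∈ C, (2 * n + ((C.card : ℝ) - 1) * n) from Finset.sum_congr rfl hterm]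
      rw [Finset.sum_const, nsmul_eq_mul]
    have hz0 : ∀ j ∈ insert z C, a j = 0 := by
      intro j hj
      simp only [hadef]
      apply Finset.card_eq_zero.mpr
      rw [Finset.filter_eq_empty_iff]
      rcases Finset.mem_insert.mp hj with hjz | hjC
      · intro x hx
        rw [hjz, gsym x z, gz x]; norm_num
      · intro x hx
        rcases eq_or_ne x j with rfl | hxj
        · rw [gdiag x]; norm_num
        · rw [hconE x hx j hjC hxj]; norm_num
    set T := Finset.univ \ insert z C with hTdef
    have houtside : ∀ j ∈ Finset.univ, j ∉ T → (a j : ℝ) = 0 := by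
      intro j _ hjT
      have hj : j ∈ insert z C := by
        by_contra h
        exact hjT (Finset.mem_sdiff.mpr ⟨Finset.mem_univ j, h⟩)
      rw [hz0 j hj]; norm_num
    have houtside2 : ∀ j ∈ Finset.univ, j ∉ T → (a j : ℝ)^2 = 0 := by
      intro j h1 h2
      rw [houtside j h1 h2]
      norm_num
    have hTsum1 : ∑ j ∈ T, (a j : ℝ) = ∑ j, (a j : ℝ) :=
      Finset.sum_subset (Finset.subset_univ T) houtside
    have hTsum2 : ∑ j ∈ T, (a j : ℝ)^2 = ∑ j, (a j : ℝ)^2 :=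
      Finset.sum_subset (Finset.subset_univ T) houtside2
    have hzC : z ∉ C := fun h => hCz z h rfl
    have hcardle : C.card + 1 ≤ n := by
      have h1 := Finset.card_le_univ (insert z C)
      rw [Finset.card_insert_of_notMem hzC, Fintype.card_fin] at h1
      exact h1
    have hTcard : ((T.card : ℝ)) = n - ((C.card : ℝ) + 1) := by
      rw [hTdef, Finset.card_sdiff_of_subset (Finset.subset_univ _),
        Finset.card_insert_of_notMem hzC, Finset.card_univ, Fintype.card_fin,
        Nat.cast_sub hcardle]
      push_cast
      ring
    have hCS := sq_sum_le_card_mul_sum_sq (s := T) (f := fun j => (a j : ℝ))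
    simp only [hTsum1, hTsum2] at hCS
    rw [hTcard] at hCS
    set sc := (C.card : ℝ) with hscdef
    clear_value sc
    have hnsc : (n : ℝ) = 4 * sc := by linarith
    have hsum1 : ∑ j, (a j : ℝ) = 2 * sc^2 := by
      have := hid1'
      rw [hnsc] at this
      nlinarith [this]
    have hsum2 : ∑ j, (a j : ℝ)^2 = sc^2 * (sc + 1) := by
      have := hid2'
      rw [hnsc] at this
      nlinarith [this]
    have hn30 : (30 : ℝ) ≤ (n : ℝ) := by exact_mod_cast hn
    have hsc : sc ≥ 30 / 4 := by linarith
    rw [hsum1, hsum2, hnsc] at hCS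
    have hfact : sc^2 * (sc - 1)^2 ≤ 0 := by nlinarith [hCS]
    have h1 : (0:ℝ) < sc := by linarith
    have h2 : (0:ℝ) < sc - 1 := by linarith
    nlinarith [hfact, mul_pos (mul_pos h1 h1) (mul_pos h2 h2)]
  obtain ⟨x, hxC, y, hyC, hxy, hgxy⟩ := key
  have hxz := hCz x hxC
  have hyz := hCz y hyC
  have hxu := hCu x hxC
  have hyu := hCu y hyC
  have hxv := hCv x hxC
  have hyv := hCv y hyC
  have hgux : gmat H z u x = -1 := (hCmem x hxC).1
  have hguy : gmat H z u y = -1 := (hCmem y hyC).1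
  have hgvx : gmat H z v x = -1 := (hCmem x hxC).2
  have hgvy : gmat H z v y = -1 := (hCmem y hyC).2
  have hg2H : ∀ p q : Fin n, gmat H z p q = -1 → H p q = -(H z p * H z q) := by
    intro p q hg
    have h1 := hsq z p
    have h2 := hsq z q
    unfold gmat at hg
    linear_combination (H z p * H z q) * hg - (H p q * (H z q * H z q)) * h1 - H p q * h2
  refine ⟨{z, u, v, x, y}, ?_, fun w => if w = z then (1:ℝ) else -H z w, ?_, ?_⟩
  · rw [show ({z, u, v, x, y} : Finset (Fin n))
        = insert z (insert u (insert v (insert x {y}))) from rfl]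
    rw [Finset.card_insert_of_notMem (by
      simp only [Finset.mem_insert, Finset.mem_singleton]
      push_neg
      exact ⟨fun h => huz h.symm, fun h => hvz h.symm, fun h => hxz h.symm,
        fun h => hyz h.symm⟩)]
    rw [Finset.card_insert_of_notMem (by
      simp only [Finset.mem_insert, Finset.mem_singleton]
      push_neg
      exact ⟨fun h => hvu h.symm, fun h => hxu h.symm, fun h => hyu h.symm⟩)]
    rw [Finset.card_insert_of_notMem (by
      simp only [Finset.mem_insert, Finset.mem_singleton]
      push_neg
      exact ⟨fun h => hxv h.symm, fun h => hyv h.symm⟩)]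
    rw [Finset.card_insert_of_notMem (by
      simp only [Finset.mem_singleton]
      exact hxy)]
    rw [Finset.card_singleton]
  · intro i
    dsimp only
    by_cases h : i = z
    · left; rw [if_pos h]
    · rw [if_neg h]
      rcases hent z i with h1 | h1 <;> rw [h1]
      · right; norm_num
      · left; norm_num
  · intro p hp q hq hpq
    dsimp only
    simp only [Finset.mem_insert, Finset.mem_singleton] at hp hq
    by_cases hpz : p = z
    · have hqz : q ≠ z := fun h => hpq (by rw [hpz, h])
      rw [if_pos hpz, if_neg hqz, hpz]
      ring
    · by_cases hqz : q = z
      · rw [if_neg hpz, if_pos hqz, hqz, hsymE p z]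
        ring
      · rw [if_neg hpz, if_neg hqz]
        have hg : gmat H z p q = -1 := by
          rcases hp with h | h | h | h | h
          · exact absurd h hpz
          all_goals rcases hq with h' | h' | h' | h' | h'
          all_goals first
            | exact absurd h' hqz
            | exact absurd (h.trans h'.symm) hpq
            | (rw [h, h']; assumption)
            | (rw [h, h', gsym]; assumption)
        rw [hg2H p q hg]
        ring

lemma errInf_eq {n k m : ℕ} (F : TwoUniformFrame n k) (hm : 1 ≤ m)
    (hck : c n k ≤ (k:ℝ)/n)
    (S : Finset (Fin n)) (hS : S.card = m) (ε : Fin n → ℝ)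
    (hε : ∀ i, ε i = 1 ∨ ε i = -1)
    (hQε : ∀ i ∈ S, ∀ j ∈ S, i ≠ j → F.Q i j = ε i * ε j) :
    errInf F.V m = (k:ℝ)/n + ((m:ℝ)-1) * c n k := by
  have hc : 0 ≤ c n k := Real.sqrt_nonneg _
  have hkn0 : 0 ≤ (k:ℝ)/n := le_trans hc hck
  have hm1 : (1:ℝ) ≤ (m:ℝ) := by exact_mod_cast hm
  set B := (k:ℝ)/n + ((m:ℝ)-1) * c n k with hBdef
  have hB : 0 ≤ B := by
    have : 0 ≤ ((m:ℝ)-1) * c n k := mul_nonneg (by linarith) hc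
    simp only [hBdef]; linarith
  have hWsym : (F.V * F.Vᵀ)ᵀ = F.V * F.Vᵀ := by
    rw [Matrix.transpose_mul, Matrix.transpose_transpose]
  have hW : ∀ i j, i ≠ j → (F.V * F.Vᵀ) i j = c n k * F.Q i j := by
    intro i j hij
    rw [F.gram]
    simp [Matrix.add_apply, Matrix.smul_apply, Matrix.one_apply_ne hij]
  have hWd : ∀ i, (F.V * F.Vᵀ) i i = (k:ℝ)/n := by
    intro i
    rw [F.gram]
    simp [Matrix.add_apply, Matrix.smul_apply, Matrix.one_apply, F.diag i]
  have hQabs : ∀ i j, i ≠ j → |F.Q i j| = 1 := by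
    intro i j hij
    rcases F.offdiag i j hij with h | h <;> rw [h] <;> norm_num
  -- generic facts about diagS
  have hDT : ∀ S' : Finset (Fin n), (diagS S')ᵀ = diagS S' := fun S' => Matrix.diagonal_transpose _
  have hDD : ∀ S' : Finset (Fin n), diagS S' * diagS S' = diagS S' := by
    intro S'
    ext i j
    rcases eq_or_ne i j with hij | hij
    · subst hij
      by_cases h : i ∈ S' <;>
        simp [diagS, Matrix.diagonal_mul_diagonal, Matrix.diagonal_apply, h]
    · simp [diagS, Matrix.diagonal_mul_diagonal, Matrix.diagonal_apply, hij]
  have hGe : ∀ (S' : Finset (Fin n)) i j,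
      (diagS S' * (F.V * F.Vᵀ) * diagS S') i j
        = (if i ∈ S' then (1:ℝ) else 0) * (F.V * F.Vᵀ) i j * (if j ∈ S' then 1 else 0) := by
    intro S' i j
    simp only [diagS]
    rw [Matrix.mul_diagonal, Matrix.diagonal_mul]
  have upper : ∀ S' : Finset (Fin n), S'.card = m →
      opNorm (F.Vᵀ * diagS S' * F.V) ≤ B := by
    intro S' hS'
    rw [opNorm_sandwich F.V (diagS S') (hDT S') (hDD S')]
    refine l2_opNorm_le_row_sums _ ?_ hB ?_
    · ext i j
      rw [Matrix.transpose_apply, hGe, hGe]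
      have : (F.V * F.Vᵀ) j i = (F.V * F.Vᵀ) i j := by
        rw [← Matrix.transpose_apply (F.V * F.Vᵀ) i j, hWsym]
      rw [this]; ring
    · intro i
      by_cases hi : i ∈ S'
      · have hrow : ∀ j, |(diagS S' * (F.V * F.Vᵀ) * diagS S') i j|
            = if j ∈ S' then |(F.V * F.Vᵀ) i j| else 0 := by
          intro j
          rw [hGe S' i j, if_pos hi]
          by_cases hj : j ∈ S' <;> simp [hj, abs_mul]
        rw [Finset.sum_congr rfl fun j _ => hrow j]
        rw [Finset.sum_ite_mem, Finset.univ_inter]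
        rw [← Finset.add_sum_erase _ _ hi]
        have h1 : |(F.V * F.Vᵀ) i i| = (k:ℝ)/n := by rw [hWd i, abs_of_nonneg hkn0]
        have h2 : ∀ j ∈ S'.erase i, |(F.V * F.Vᵀ) i j| = c n k := by
          intro j hj
          have hij : i ≠ j := (Finset.ne_of_mem_erase hj).symm
          rw [hW i j hij, abs_mul, hQabs i j hij, abs_of_nonneg hc, mul_one]
        rw [h1, Finset.sum_congr rfl h2, Finset.sum_const, nsmul_eq_mul,
          Finset.card_erase_of_mem hi, hS']
        have : ((m - 1 : ℕ) : ℝ) = (m:ℝ) - 1 := by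
          have := Nat.cast_sub hm (R := ℝ); simpa using this
        rw [this]
      · have hrow : ∀ j, |(diagS S' * (F.V * F.Vᵀ) * diagS S') i j| = 0 := by
          intro j
          rw [hGe S' i j, if_neg hi]
          simp
        rw [Finset.sum_congr rfl fun j _ => hrow j]
        simpa using hB
  have lower : B ≤ opNorm (F.Vᵀ * diagS S * F.V) := by
    rw [opNorm_sandwich F.V (diagS S) (hDT S) (hDD S)]
    set w : Fin n → ℝ := fun j => if j ∈ S then ε j else 0 with hwdef
    have hScard : 0 < S.card := by omega
    obtain ⟨i0, hi0⟩ := Finset.card_pos.mp hScard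
    have hεne : ∀ i, ε i ≠ 0 := by
      intro i; rcases hε i with h | h <;> rw [h] <;> norm_num
    have hw : w ≠ 0 := by
      intro hcon
      have := congrFun hcon i0
      rw [hwdef] at this
      simp only [if_pos hi0, Pi.zero_apply] at this
      exact hεne i0 this
    apply le_l2_opNorm_of_eigen _ hw hB
    funext i
    rw [Matrix.mulVec, dotProduct]
    by_cases hi : i ∈ S
    · have hterm : ∀ j, (diagS S * (F.V * F.Vᵀ) * diagS S) i j * w j
          = if j ∈ S then (F.V * F.Vᵀ) i j * ε j else 0 := by
        intro j
        rw [hGe S i j, if_pos hi, hwdef]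
        by_cases hj : j ∈ S <;> simp [hj]
      rw [Finset.sum_congr rfl fun j _ => hterm j]
      rw [Finset.sum_ite_mem, Finset.univ_inter, ← Finset.add_sum_erase _ _ hi]
      have h2 : ∀ j ∈ S.erase i, (F.V * F.Vᵀ) i j * ε j = c n k * ε i := by
        intro j hj
        have hji : i ≠ j := (Finset.ne_of_mem_erase hj).symm
        have hεj : ε j * ε j = 1 := by rcases hε j with h | h <;> rw [h] <;> norm_num
        rw [hW i j hji, hQε i hi j (Finset.mem_of_mem_erase hj) hji]
        calc c n k * (ε i * ε j) * ε j = c n k * ε i * (ε j * ε j) := by ring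
          _ = c n k * ε i := by rw [hεj, mul_one]
      rw [hWd i, Finset.sum_congr rfl h2, Finset.sum_const, nsmul_eq_mul,
        Finset.card_erase_of_mem hi, hS]
      have hcast : ((m - 1 : ℕ) : ℝ) = (m:ℝ) - 1 := by
        have := Nat.cast_sub hm (R := ℝ); simpa using this
      rw [hcast]
      have : w i = ε i := by rw [hwdef]; simp [hi]
      rw [Pi.smul_apply, this, smul_eq_mul, hBdef]
      ring
    · have hterm : ∀ j, (diagS S * (F.V * F.Vᵀ) * diagS S) i j * w j = 0 := by
        intro j
        rw [hGe S i j, if_neg hi]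
        ring
      rw [Finset.sum_congr rfl fun j _ => hterm j]
      have : w i = 0 := by rw [hwdef]; simp [hi]
      rw [Pi.smul_apply, this, smul_eq_mul, mul_zero, Finset.sum_const_zero]
  have main : opNorm (F.Vᵀ * diagS S * F.V) = B := le_antisymm (upper S hS) lower
  rw [errInf]
  apply le_antisymm
  · apply Real.sSup_le _ hB
    rintro x ⟨S', h1, rfl⟩
    exact upper S' h1
  · apply le_csSup
    · exact ⟨B, by rintro x ⟨S', h1, rfl⟩; exact upper S' h1⟩
    · exact ⟨S, hS, main.symm⟩

theorem statement19 (n : ℕ) (hn : 30 ≤ n)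
    (H : Matrix (Fin n) (Fin n) ℝ) (hsym : Hᵀ = H)
    (hent : ∀ i j, H i j = 1 ∨ H i j = -1) (hdiag : ∀ i, H i i = 1)
    (hHad : H * H = (n : ℝ) • (1 : Matrix (Fin n) (Fin n) ℝ))
    (k : ℕ) (hk : (k : ℝ) = ((n : ℝ) - Real.sqrt n) / 2)
    (F : TwoUniformFrame n k) (hQ : F.Q = 1 - H) :
    HasInducedCompleteBipartite (frameGraph F) 5 ∧
    ∀ m : ℕ, 1 ≤ m → m ≤ 5 →
      errInf F.V m = (k : ℝ) / n + ((m : ℝ) - 1) * c n k := by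
  have hnR : (30 : ℝ) ≤ (n : ℝ) := by exact_mod_cast hn
  have ht0 : 0 ≤ Real.sqrt n := Real.sqrt_nonneg _
  have ht2 : (Real.sqrt n) ^ 2 = (n : ℝ) := Real.sq_sqrt (by positivity)
  have htge : 2 ≤ Real.sqrt n := by nlinarith
  have hk1 : (1 : ℝ) ≤ (k : ℝ) := by rw [hk]; nlinarith
  have hkn : (k : ℝ) ≤ (n : ℝ) := by rw [hk]; nlinarith
  have hck : c n k ≤ (k : ℝ) / n := by
    have harg : (k : ℝ) * ((n : ℝ) - k) / ((n : ℝ) ^ 2 * ((n : ℝ) - 1))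
        ≤ ((k : ℝ) / n) ^ 2 := by
      have key : (k : ℝ) * ((n : ℝ) - k) ≤ (k : ℝ) ^ 2 * ((n : ℝ) - 1) := by
        nlinarith [mul_nonneg (mul_nonneg (by linarith : (0:ℝ) ≤ (k : ℝ))
          (by linarith : (0:ℝ) ≤ (n : ℝ))) (by linarith : (0:ℝ) ≤ (k : ℝ) - 1)]
      rw [div_pow, div_le_div_iff₀ (by nlinarith) (by nlinarith)]
      nlinarith [mul_le_mul_of_nonneg_right key (sq_nonneg ((n : ℝ)))]
    calc c n k ≤ Real.sqrt (((k : ℝ) / n) ^ 2) := Real.sqrt_le_sqrt harg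
      _ = (k : ℝ) / n := Real.sqrt_sq (by positivity)
  obtain ⟨S5, hS5card, ε, hε, hH⟩ := existsFive n hn H hsym hent hdiag hHad
  have hQε5 : ∀ p ∈ S5, ∀ q ∈ S5, p ≠ q → F.Q p q = ε p * ε q := by
    intro p hp q hq hpq
    rw [hQ, Matrix.sub_apply, Matrix.one_apply_ne hpq, hH p hp q hq hpq]
    ring
  constructor
  · refine ⟨S5, hS5card, ⟨{w : ↥(S5 : Set (Fin n)) | ε ↑w = 1}, ?_⟩⟩
    intro i j
    have hAdj : ((frameGraph F).induce (S5 : Set (Fin n))).Adj i j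
        ↔ ((i : Fin n) ≠ (j : Fin n) ∧ F.Q i j = -1) := Iff.rfl
    rcases eq_or_ne (i : Fin n) (j : Fin n) with hij | hij
    · have hij' : i = j := Subtype.ext hij
      subst hij'
      rw [hAdj]
      simp
    · rw [hAdj]
      have hQij : F.Q i j = ε i * ε j :=
        hQε5 _ (Finset.mem_coe.mp i.2) _ (Finset.mem_coe.mp j.2) hij
      rw [hQij]
      simp only [Set.mem_setOf_eq, ne_eq, hij, not_false_iff, true_and]
      rcases hε (i : Fin n) with h1 | h1 <;> rcases hε (j : Fin n) with h2 | h2 <;>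
        rw [h1, h2] <;> norm_num
  · intro m hm1 hm5
    obtain ⟨S', hS'sub, hS'card⟩ :=
      Finset.exists_subset_card_eq (n := m) (s := S5)
        (by rw [hS5card]; exact hm5)
    exact errInf_eq F hm1 hck S' hS'card ε hε
      (fun p hp q hq hpq => hQε5 p (hS'sub hp) q (hS'sub hq) hpq)

end FramesErasures
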